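/- Let f be a polynomial with real coefficients, and define the umbral evaluation f(B_x) := e^{-x} Σ_{k≥0} f(k) x^k/k! (a polynomial in x). If for every positive real x, every real zero condition holds — namely f(B_x), viewed as a polynomial in x, has only real zeros — then for any nonnegative integer r the polynomial x ↦ e^{-x} Σ_{k≥0} f(k+r) x^k/k! also has only real zeros. -/

import Mathlib

open Polynomial

noncomputable section

/-- A real polynomial has only real zeros: every complex root has imaginary part zero. -/
def RZ (p : Polynomial ℝ) : Prop :=
  ∀ z : ℂ, (p.map (algebraMap ℝ ℂ)).IsRoot z → z.im = 0

lemma RZ.ne_zero' {P : Polynomial ℝ} (h : RZ P) : P ≠ 0 := by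
  intro h0
  have := h Complex.I (by simp [h0, Polynomial.IsRoot])
  simp [Complex.I_im] at this

lemma splits_of_RZ_aux : ∀ (n : ℕ) (P : Polynomial ℝ), P.natDegree ≤ n → RZ P → P ≠ 0 →
    P.Splits := by
  intro n
  induction n with
  | zero => exact fun P hd _ _ => Splits.of_natDegree_le_one (by omega)
  | succ n ih =>
    intro P hd hRZ h0
    by_cases hdeg : P.natDegree ≤ n
    · exact ih P hdeg hRZ h0
    · have hP1 : P.natDegree = n + 1 := by omega
      have hmapdeg : (P.map (algebraMap ℝ ℂ)).degree ≠ 0 := by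
        rw [degree_map_eq_of_injective (algebraMap ℝ ℂ).injective, degree_eq_natDegree h0, hP1]
        intro hc
        have hc' : (n + 1 : ℕ) = 0 := by exact_mod_cast hc
        omega
      obtain ⟨z, hz⟩ := IsAlgClosed.exists_root (P.map (algebraMap ℝ ℂ)) hmapdeg
      have him := hRZ z hz
      have hzr : z = ((z.re : ℝ) : ℂ) := Complex.ext rfl (by simp [him])
      have hroot : P.IsRoot z.re := by
        have h1 : (P.map (algebraMap ℝ ℂ)).eval ((algebraMap ℝ ℂ) z.re) =
            algebraMap ℝ ℂ (P.eval z.re) := by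
          rw [eval_map, eval₂_hom]
        have h2 : (P.map (algebraMap ℝ ℂ)).eval ((algebraMap ℝ ℂ) z.re) = 0 := by
          rw [← hz.eq_zero]; congr 1; exact_mod_cast hzr.symm
        have := h1.symm.trans h2
        exact (map_eq_zero_iff _ (algebraMap ℝ ℂ).injective).mp this
      obtain ⟨Q, hQ⟩ := (dvd_iff_isRoot).mpr hroot
      have hQ0 : Q ≠ 0 := by
        rintro rfl
        rw [mul_zero] at hQ
        exact h0 hQ
      have hQRZ : RZ Q := by
        intro w hw
        apply hRZ w
        have hPQ : P.map (algebraMap ℝ ℂ) =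
            (X - C ((algebraMap ℝ ℂ) z.re)) * Q.map (algebraMap ℝ ℂ) := by
          rw [hQ, Polynomial.map_mul, Polynomial.map_sub, map_X, map_C]
        simp only [Polynomial.IsRoot, hPQ, eval_mul]
        rw [hw.eq_zero, mul_zero]
      have hQdeg : Q.natDegree ≤ n := by
        have := natDegree_mul (X_sub_C_ne_zero z.re) hQ0
        rw [← hQ, natDegree_X_sub_C, hP1] at this
        omega
      rw [hQ]
      exact (Splits.X_sub_C _).mul (ih Q hQdeg hQRZ hQ0)

lemma eval_derivative_list_prod (l : List ℂ) (z : ℂ) (hz : ∀ r ∈ l, z - r ≠ 0) :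
    Polynomial.eval z (Polynomial.derivative (l.map fun r => X - C r).prod) =
      Polynomial.eval z (l.map fun r => X - C r).prod * (l.map fun r => (z - r)⁻¹).sum := by
  induction l with
  | nil => simp
  | cons a t ih =>
    have ha : z - a ≠ 0 := hz a List.mem_cons_self
    have ih' := ih (fun r hr => hz r (List.mem_cons_of_mem a hr))
    simp only [List.map_cons, List.prod_cons, derivative_mul, List.sum_cons, eval_add, eval_mul,
      ih', derivative_sub, derivative_X, derivative_C, eval_one, eval_sub, eval_X, eval_C,
      sub_zero]
    field_simp

lemma im_list_sum_inv (z : ℂ) (l : List ℝ) :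
    ((l.map fun r : ℝ => (z - (r : ℂ))⁻¹).sum).im
      = -z.im * (l.map fun r : ℝ => (Complex.normSq (z - (r : ℂ)))⁻¹).sum := by
  induction l with
  | nil => simp
  | cons a t ih =>
    simp only [List.map_cons, List.sum_cons, Complex.add_im, ih, Complex.inv_im]
    have h1 : (z - (a : ℂ)).im = z.im := by simp
    rw [h1, div_eq_mul_inv]
    ring

lemma RZ_add_derivative {P : Polynomial ℝ} (h : RZ P) : RZ (P + derivative P) := by
  have h0 : P ≠ 0 := h.ne_zero'
  obtain ⟨s, hs⟩ := splits_iff_exists_multiset.mp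
    (splits_of_RZ_aux P.natDegree P le_rfl h h0)
  obtain ⟨l, rfl⟩ : ∃ l : List ℝ, s = ↑l := ⟨s.toList, s.coe_toList.symm⟩
  intro z hz
  by_contra him
  have hzr : ∀ r ∈ l, z - (r : ℂ) ≠ 0 := by
    intro r hr hzero
    apply him
    have hzr' : z = (r : ℂ) := by linear_combination hzero
    rw [hzr']; simp
  have hfac : P.map (algebraMap ℝ ℂ) =
      C ((P.leadingCoeff : ℂ)) * ((l.map fun r : ℝ => ((r : ℝ) : ℂ)).map fun w => X - C w).prod := by
    conv_lhs => rw [hs]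
    rw [Polynomial.map_mul, map_C, Multiset.map_coe, Multiset.prod_coe, ← coe_mapRingHom,
      map_list_prod, List.map_map, List.map_map]
    simp [Function.comp_def, Polynomial.map_sub]
  set l' : List ℂ := l.map fun r : ℝ => ((r : ℝ) : ℂ) with hl'
  have hzr2 : ∀ w ∈ l', z - w ≠ 0 := by
    intro w hw
    rw [hl', List.mem_map] at hw
    obtain ⟨r, hr, rfl⟩ := hw
    exact hzr r hr
  have hlc : ((P.leadingCoeff : ℂ)) ≠ 0 := by
    exact_mod_cast leadingCoeff_ne_zero.mpr h0
  have hPz : (P.map (algebraMap ℝ ℂ)).eval z ≠ 0 := by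
    rw [hfac]
    simp only [eval_mul, eval_C, eval_list_prod, List.map_map]
    apply mul_ne_zero hlc
    apply List.prod_ne_zero
    intro hmem
    rw [List.mem_map] at hmem
    obtain ⟨w, hw, hval⟩ := hmem
    apply hzr2 w hw
    simpa using hval
  set S : ℂ := (l'.map fun w => (z - w)⁻¹).sum with hS
  have hder : ((P + derivative P).map (algebraMap ℝ ℂ)).eval z =
      (P.map (algebraMap ℝ ℂ)).eval z * (1 + S) := by
    rw [Polynomial.map_add, eval_add, ← derivative_map, hfac, derivative_C_mul, eval_mul, eval_mul,
      eval_C, eval_derivative_list_prod l' z hzr2]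
    ring
  rw [Polynomial.IsRoot, hder] at hz
  have hS1 : 1 + S = 0 := by
    rcases mul_eq_zero.mp hz with h' | h'
    · exact absurd h' hPz
    · exact h'
  have hSim : S.im = 0 := by
    have : S = -1 := by linear_combination hS1
    rw [this]; simp
  have hsum0 : (l.map fun r : ℝ => (Complex.normSq (z - (r : ℂ)))⁻¹).sum = 0 := by
    have heq := hSim
    rw [hS, hl', List.map_map] at heq
    simp only [Function.comp_def] at heq
    rw [im_list_sum_inv z l] at heq
    rcases mul_eq_zero.mp heq with h' | h'
    · exact absurd (neg_eq_zero.mp h') him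
    · exact h'
  rcases l with _ | ⟨a, t⟩
  · rw [hS] at hS1
    simp [hl'] at hS1
  · have hpos : 0 < ((a :: t).map fun r : ℝ => (Complex.normSq (z - (r : ℂ)))⁻¹).sum := by
      apply List.sum_pos
      · intro x hx
        rw [List.mem_map] at hx
        obtain ⟨r, hr, rfl⟩ := hx
        exact inv_pos.mpr (Complex.normSq_pos.mpr (hzr r hr))
      · simp
    rw [hsum0] at hpos
    exact lt_irrefl _ hpos


/-- `HS g P` : the umbral sum of `g` is `exp x * P x`. -/
def HS (g P : Polynomial ℝ) : Prop :=
  ∀ x : ℝ, HasSum (fun k : ℕ => g.eval (k : ℝ) * x ^ k / (k.factorial : ℝ))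
    (Real.exp x * P.eval x)

lemma hasSum_exp_real (x : ℝ) :
    HasSum (fun n : ℕ => x ^ n / (n.factorial : ℝ)) (Real.exp x) := by
  rw [Real.exp_eq_exp_ℝ]
  exact NormedSpace.expSeries_div_hasSum_exp x

lemma HS_descPochhammer (n : ℕ) : HS (descPochhammer ℝ n) (X ^ n) := by
  intro x
  have hexp := (hasSum_exp_real x).mul_left (x ^ n)
  have hval : Real.exp x * Polynomial.eval x (X ^ n : Polynomial ℝ) = x ^ n * Real.exp x := by
    simp [mul_comm]
  rw [hval]
  have hinj : Function.Injective (fun m : ℕ => m + n) := fun a b h => by dsimp at h; omega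
  have hzero : ∀ k ∉ Set.range (fun m : ℕ => m + n),
      (descPochhammer ℝ n).eval (k : ℝ) * x ^ k / (k.factorial : ℝ) = 0 := by
    intro k hk
    have hkn : k < n := by
      by_contra hle
      exact hk ⟨k - n, by dsimp; omega⟩
    rw [descPochhammer_eval_eq_descFactorial, Nat.descFactorial_eq_zero_iff_lt.mpr hkn]
    simp
  refine (Function.Injective.hasSum_iff hinj hzero).mp ?_
  have hkey : (fun k : ℕ => (descPochhammer ℝ n).eval (k : ℝ) * x ^ k / (k.factorial : ℝ))
      ∘ (fun m : ℕ => m + n) = fun m : ℕ => x ^ n * (x ^ m / (m.factorial : ℝ)) := by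
    funext m
    simp only [Function.comp_apply]
    rw [descPochhammer_eval_eq_descFactorial]
    have h2 : (m.factorial : ℝ) * ((m + n).descFactorial n : ℝ) = ((m + n).factorial : ℝ) := by
      rw [← Nat.cast_mul, Nat.cast_inj]
      have := Nat.factorial_mul_descFactorial (Nat.le_add_left n m)
      rwa [show m + n - n = m by omega] at this
    have hm : (m.factorial : ℝ) ≠ 0 := Nat.cast_ne_zero.mpr m.factorial_ne_zero
    have hmn : ((m + n).factorial : ℝ) ≠ 0 := Nat.cast_ne_zero.mpr (m + n).factorial_ne_zero
    field_simp
    rw [mul_assoc ((m + n).factorial : ℝ), ← pow_add, add_comm n m]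
    linear_combination x ^ (m + n) * h2
  rw [hkey]
  exact hexp

lemma HS_zero : HS 0 0 := by
  intro x
  simpa using (hasSum_zero : HasSum (fun _ : ℕ => (0 : ℝ)) 0)

lemma HS_add {g h P Q : Polynomial ℝ} (hg : HS g P) (hh : HS h Q) : HS (g + h) (P + Q) := by
  intro x
  have hfun : (fun k : ℕ => (g + h).eval (k : ℝ) * x ^ k / (k.factorial : ℝ))
      = fun k : ℕ => g.eval (k : ℝ) * x ^ k / (k.factorial : ℝ)
        + h.eval (k : ℝ) * x ^ k / (k.factorial : ℝ) := by
    funext k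
    rw [eval_add]
    ring
  rw [hfun, eval_add, mul_add]
  exact (hg x).add (hh x)

lemma HS_C_mul {g P : Polynomial ℝ} (c : ℝ) (hg : HS g P) : HS (C c * g) (C c * P) := by
  intro x
  have hfun : (fun k : ℕ => (C c * g).eval (k : ℝ) * x ^ k / (k.factorial : ℝ))
      = fun k : ℕ => c * (g.eval (k : ℝ) * x ^ k / (k.factorial : ℝ)) := by
    funext k
    rw [eval_mul, eval_C]
    ring
  have hval : Real.exp x * (C c * P).eval x = c * (Real.exp x * P.eval x) := by
    rw [eval_mul, eval_C]; ring
  rw [hfun, hval]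
  exact (hg x).mul_left c

lemma HS_sum {ι : Type*} (s : Finset ι) (g P : ι → Polynomial ℝ)
    (h : ∀ i ∈ s, HS (g i) (P i)) : HS (∑ i ∈ s, g i) (∑ i ∈ s, P i) := by
  classical
  induction s using Finset.cons_induction with
  | empty => simpa using HS_zero
  | cons a s ha ih =>
    rw [Finset.sum_cons, Finset.sum_cons]
    exact HS_add (h a (Finset.mem_cons_self a s))
      (ih fun i hi => h i (Finset.mem_cons_of_mem hi))

lemma HS_unique {g P Q : Polynomial ℝ} (h1 : HS g P) (h2 : HS g Q) : P = Q :=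
  Polynomial.funext fun x => mul_left_cancel₀ (Real.exp_ne_zero x) ((h1 x).unique (h2 x))

lemma descPochhammer_span : ∀ (d : ℕ) (g : Polynomial ℝ), g.natDegree ≤ d →
    ∃ c : ℕ → ℝ, g = ∑ n ∈ Finset.range (d + 1), C (c n) * descPochhammer ℝ n := by
  intro d
  induction d with
  | zero =>
    intro g hg
    refine ⟨fun _ => g.coeff 0, ?_⟩
    rw [Finset.sum_range_one, descPochhammer_zero, mul_one]
    exact Polynomial.eq_C_of_natDegree_le_zero hg
  | succ d ih =>
    intro g hg
    by_cases h : g.natDegree ≤ d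
    · obtain ⟨c, hc⟩ := ih g h
      refine ⟨fun n => if n = d + 1 then 0 else c n, ?_⟩
      rw [Finset.sum_range_succ]
      dsimp only
      rw [if_pos rfl, map_zero, zero_mul, add_zero, hc]
      apply Finset.sum_congr rfl
      intro n hn
      rw [Finset.mem_range] at hn
      rw [if_neg (by omega)]
    · have hdeg : g.natDegree = d + 1 := by omega
      have hcoeff1 : (descPochhammer ℝ (d + 1)).coeff (d + 1) = 1 := by
        have hmonic := monic_descPochhammer ℝ (d + 1)
        have := hmonic.coeff_natDegree
        rwa [descPochhammer_natDegree] at this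
      have hd' : (g - C g.leadingCoeff * descPochhammer ℝ (d + 1)).natDegree ≤ d := by
        rw [Polynomial.natDegree_le_iff_coeff_eq_zero]
        intro m hm
        rw [coeff_sub, coeff_C_mul]
        by_cases hm2 : m = d + 1
        · rw [hm2, hcoeff1, mul_one, ← hdeg, coeff_natDegree, sub_self]
        · rw [coeff_eq_zero_of_natDegree_lt (by omega : g.natDegree < m),
            coeff_eq_zero_of_natDegree_lt (by rw [descPochhammer_natDegree]; omega),
            mul_zero, sub_zero]
      obtain ⟨c, hc⟩ := ih _ hd'
      refine ⟨fun n => if n = d + 1 then g.leadingCoeff else c n, ?_⟩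
      rw [Finset.sum_range_succ]
      dsimp only
      rw [if_pos rfl]
      have hsum : (∑ n ∈ Finset.range (d + 1),
            C (if n = d + 1 then g.leadingCoeff else c n) * descPochhammer ℝ n)
          = g - C g.leadingCoeff * descPochhammer ℝ (d + 1) := by
        rw [hc]
        apply Finset.sum_congr rfl
        intro n hn
        rw [Finset.mem_range] at hn
        rw [if_neg (by omega)]
      rw [hsum]
      ring

lemma descPochhammer_comp_X_add_one (n : ℕ) :
    (descPochhammer ℝ (n + 1)).comp (X + 1) =
      descPochhammer ℝ (n + 1) + C ((n : ℝ) + 1) * descPochhammer ℝ n := by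
  have h1 : (descPochhammer ℝ (n + 1)).comp (X + 1) = (X + 1) * descPochhammer ℝ n := by
    rw [descPochhammer_succ_left, mul_comp, X_comp, comp_assoc]
    have hx : (X - 1 : Polynomial ℝ).comp (X + 1) = X := by
      rw [sub_comp, X_comp, one_comp]
      ring
    rw [hx, comp_X]
  rw [h1, descPochhammer_succ_right, map_add, map_one, Polynomial.C_eq_natCast]
  ring

lemma HS_basis_comp (n : ℕ) :
    HS ((descPochhammer ℝ n).comp (X + 1)) (X ^ n + C (n : ℝ) * X ^ (n - 1)) := by
  cases n with
  | zero =>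
    simp only [descPochhammer_zero, one_comp, Nat.cast_zero, map_zero, zero_mul, add_zero]
    have h := HS_descPochhammer 0
    rwa [pow_zero] at h ⊢
  | succ m =>
    rw [descPochhammer_comp_X_add_one]
    have := HS_add (HS_descPochhammer (m + 1))
      (HS_C_mul ((m : ℝ) + 1) (HS_descPochhammer m))
    simpa using this

lemma HS_comp {g P : Polynomial ℝ} (hgP : HS g P) : HS (g.comp (X + 1)) (P + derivative P) := by
  obtain ⟨c, hc⟩ := descPochhammer_span g.natDegree g le_rfl
  set N := g.natDegree + 1 with hN
  have h1 : HS g (∑ n ∈ Finset.range N, C (c n) * X ^ n) := by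
    rw [hc]
    exact HS_sum _ _ _ (fun n _ => HS_C_mul _ (HS_descPochhammer n))
  have hP : P = ∑ n ∈ Finset.range N, C (c n) * X ^ n := HS_unique hgP h1
  have h2 : g.comp (X + 1) = ∑ n ∈ Finset.range N, C (c n) * (descPochhammer ℝ n).comp (X + 1) := by
    conv_lhs => rw [hc]
    rw [sum_comp]
    apply Finset.sum_congr rfl
    intro n _
    rw [mul_comp, C_comp]
  have h3 : HS (g.comp (X + 1))
      (∑ n ∈ Finset.range N, C (c n) * (X ^ n + C (n : ℝ) * X ^ (n - 1))) := by
    rw [h2]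
    exact HS_sum _ _ _ (fun n _ => HS_C_mul _ (HS_basis_comp n))
  have h4 : (∑ n ∈ Finset.range N, C (c n) * (X ^ n + C (n : ℝ) * X ^ (n - 1)))
      = P + derivative P := by
    rw [hP, derivative_sum, ← Finset.sum_add_distrib]
    apply Finset.sum_congr rfl
    intro n _
    rw [derivative_C_mul, derivative_X_pow]
    ring
  rwa [h4] at h3

lemma HS_exists (g : Polynomial ℝ) : ∃ P, HS g P := by
  obtain ⟨c, hc⟩ := descPochhammer_span g.natDegree g le_rfl
  have h := HS_sum (Finset.range (g.natDegree + 1))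
    (fun n => C (c n) * descPochhammer ℝ n) (fun n => C (c n) * X ^ n)
    (fun n _ => HS_C_mul _ (HS_descPochhammer n))
  rw [← hc] at h
  exact ⟨_, h⟩

/-- If the umbral evaluation `f(B_x) = e^{-x} ∑_k f(k) x^k / k!` (as a polynomial `p` in `x`)
has only real zeros, then for every nonnegative integer `r` the polynomial
`x ↦ e^{-x} ∑_k f(k + r) x^k / k!` also has only real zeros. -/
theorem umbral_shift_real_rooted (f : Polynomial ℝ) (p : Polynomial ℝ)
    (hp : ∀ x : ℝ, p.eval x =
      Real.exp (-x) * ∑' k : ℕ, f.eval (k : ℝ) * x ^ k / (k.factorial : ℝ))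
    (hpRZ : RZ p) (r : ℕ) :
    ∀ q : Polynomial ℝ, (∀ x : ℝ, q.eval x =
      Real.exp (-x) * ∑' k : ℕ, f.eval ((k : ℝ) + r) * x ^ k / (k.factorial : ℝ)) → RZ q := by
  intro q hq
  obtain ⟨P₀, hP₀⟩ := HS_exists f
  have hfp : HS f p := by
    have hpP : p = P₀ := by
      apply Polynomial.funext
      intro x
      rw [hp x, (hP₀ x).tsum_eq, Real.exp_neg, ← mul_assoc,
        inv_mul_cancel₀ (Real.exp_ne_zero x), one_mul]
    rwa [hpP]
  have main : ∀ s : ℕ, ∃ P : Polynomial ℝ, HS (f.comp (X + C (s : ℝ))) P ∧ RZ P := by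
    intro s
    induction s with
    | zero =>
      refine ⟨p, ?_, hpRZ⟩
      simpa using hfp
    | succ s ih =>
      obtain ⟨P, hP, hPRZ⟩ := ih
      refine ⟨P + derivative P, ?_, RZ_add_derivative hPRZ⟩
      have hcast : ((s + 1 : ℕ) : ℝ) = (s : ℝ) + 1 := by push_cast; ring
      have hcomp : f.comp (X + C ((s : ℝ) + 1)) = (f.comp (X + C (s : ℝ))).comp (X + 1) := by
        rw [comp_assoc]
        congr 1
        rw [add_comp, X_comp, C_comp, map_add, map_one]
        ring
      rw [hcast, hcomp]
      exact HS_comp hP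
  obtain ⟨P, hP, hPRZ⟩ := main r
  have hqP : q = P := by
    apply Polynomial.funext
    intro x
    have hsum : ∀ k : ℕ, f.eval ((k : ℝ) + r) = (f.comp (X + C (r : ℝ))).eval (k : ℝ) := by
      intro k
      rw [eval_comp, eval_add, eval_X, eval_C]
    rw [hq x]
    simp_rw [hsum]
    rw [(hP x).tsum_eq, Real.exp_neg, ← mul_assoc,
      inv_mul_cancel₀ (Real.exp_ne_zero x), one_mul]
  rwa [hqP]

end
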